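/- Let E be a real finite-dimensional inner product space with norm induced by the inner product, let 0 < ν ≤ 1, let L ≥ 0, and let f : E → ℝ be differentiable and ν-approximable with parameter L, i.e. |f(y) − f(x) − ⟨f'(x), y − x⟩| ≤ (L/(1+ν))·‖y − x‖^{1+ν} for all x, y ∈ E. Then f has ν-Hölder continuous gradient with constant (2^{1−ν}/√(1+ν))·((1+ν)/ν)^{ν/2}·L, i.e. ‖f'(x) − f'(y)‖* ≤ (2^{1−ν}/√(1+ν))·((1+ν)/ν)^{ν/2}·L·‖x − y‖^ν for all x, y ∈ E. -/

import Mathlib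

open Real NNReal

private lemma nnreal_concave' {θ : ℝ} (hθ0 : 0 < θ) (hθ1 : θ ≤ 1) (a b : ℝ≥0) :
    a ^ θ + b ^ θ ≤ 2 ^ (1 - θ) * (a + b) ^ θ := by
  have hp : 1 ≤ 1 / θ := by rw [le_div_iff₀ hθ0]; linarith [hθ1]
  have h := NNReal.rpow_add_le_mul_rpow_add_rpow (a ^ θ) (b ^ θ) hp
  have ea : (a ^ θ) ^ (1 / θ) = a := by
    rw [← NNReal.rpow_mul, mul_one_div, div_self hθ0.ne', NNReal.rpow_one]
  have eb : (b ^ θ) ^ (1 / θ) = b := by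
    rw [← NNReal.rpow_mul, mul_one_div, div_self hθ0.ne', NNReal.rpow_one]
  rw [ea, eb] at h
  calc a ^ θ + b ^ θ = ((a ^ θ + b ^ θ) ^ (1 / θ)) ^ θ := by
        rw [← NNReal.rpow_mul, one_div_mul_cancel hθ0.ne', NNReal.rpow_one]
    _ ≤ ((2 : ℝ≥0) ^ ((1 / θ : ℝ) - 1) * (a + b)) ^ θ := NNReal.rpow_le_rpow h hθ0.le
    _ = 2 ^ (1 - θ) * (a + b) ^ θ := by
        rw [NNReal.mul_rpow, ← NNReal.rpow_mul]
        congr 2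
        field_simp

private lemma real_concave' {θ : ℝ} (hθ0 : 0 < θ) (hθ1 : θ ≤ 1) {a b : ℝ}
    (ha : 0 ≤ a) (hb : 0 ≤ b) :
    a ^ θ + b ^ θ ≤ 2 ^ (1 - θ) * (a + b) ^ θ := by
  lift a to ℝ≥0 using ha
  lift b to ℝ≥0 using hb
  exact_mod_cast nnreal_concave' hθ0 hθ1 a b

set_option maxHeartbeats 1000000 in
/-- In a Euclidean (inner product) space, ν-approximability with parameter L implies
ν-Hölder continuity of the gradient with constant `(2^(1-ν)/√(1+ν)) * ((1+ν)/ν)^(ν/2) * L`. -/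
theorem approximable_implies_holder_gradient_euclidean
    {E : Type*} [NormedAddCommGroup E] [InnerProductSpace ℝ E] [FiniteDimensional ℝ E]
    (ν L : ℝ) (hν0 : 0 < ν) (hν1 : ν ≤ 1) (hL : 0 ≤ L)
    (f : E → ℝ) (f' : E → (E →L[ℝ] ℝ))
    (hdiff : ∀ x, HasFDerivAt f (f' x) x)
    (happrox : ∀ x y : E, |f y - f x - f' x (y - x)| ≤ L / (1 + ν) * ‖y - x‖ ^ (1 + ν)) :
    ∀ x y : E, ‖f' x - f' y‖ ≤
      2 ^ (1 - ν) / Real.sqrt (1 + ν) * ((1 + ν) / ν) ^ (ν / 2) * L * ‖x - y‖ ^ ν := by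
  intro x y
  have hν1' : (0 : ℝ) < 1 + ν := by linarith
  -- Step 1: midpoint four-point bound
  have key : ∀ k : E, (f' x - f' y) k ≤ L / (1 + ν) *
      (‖k - (2⁻¹ : ℝ) • (x - y)‖ ^ (1 + ν) + ‖k + (2⁻¹ : ℝ) • (x - y)‖ ^ (1 + ν)) := by
    intro k
    set e : E := (2⁻¹ : ℝ) • (x - y) with he
    set z1 : E := (2⁻¹ : ℝ) • (x + y) + k with hz1
    set z2 : E := (2⁻¹ : ℝ) • (x + y) - k with hz2
    have e1 : z1 - x = k - e := by rw [hz1, he]; module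
    have e2 : z1 - y = k + e := by rw [hz1, he]; module
    have e3 : z2 - x = -(k + e) := by rw [hz2, he]; module
    have e4 : z2 - y = -(k - e) := by rw [hz2, he]; module
    have h1 := happrox x z1
    have h2 := happrox y z1
    have h3 := happrox x z2
    have h4 := happrox y z2
    rw [e1] at h1
    rw [e2] at h2
    rw [e3, norm_neg, map_neg] at h3
    rw [e4, norm_neg, map_neg] at h4
    have identity : (f' x) (z1 - z2) - (f' y) (z1 - z2) =
        (f z2 - f x - f' x (z2 - x)) - (f z2 - f y - f' y (z2 - y))
          - (f z1 - f x - f' x (z1 - x)) + (f z1 - f y - f' y (z1 - y)) := by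
      have hx1 : (f' x) (z1 - z2) = f' x (z1 - x) - f' x (z2 - x) := by
        rw [← map_sub]; congr 1; abel
      have hy1 : (f' y) (z1 - z2) = f' y (z1 - y) - f' y (z2 - y) := by
        rw [← map_sub]; congr 1; abel
      rw [hx1, hy1]; ring
    have hz12 : z1 - z2 = k + k := by rw [hz1, hz2]; module
    rw [hz12, map_add, map_add] at identity
    rw [e1, e3] at identity
    rw [e2, e4] at identity
    rw [map_neg, map_neg] at identity
    have b1 := abs_le.mp h1
    have b2 := abs_le.mp h2
    have b3 := abs_le.mp h3
    have b4 := abs_le.mp h4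
    have expand : (f' x - f' y) k = f' x k - f' y k := rfl
    rw [expand]
    nlinarith [identity, b1.1, b1.2, b2.1, b2.2, b3.1, b3.2, b4.1, b4.2]
  -- Step 2: Euclidean averaging via the parallelogram law and concavity
  have hθ0 : 0 < (1 + ν) / 2 := by positivity
  have hθ1 : (1 + ν) / 2 ≤ 1 := by linarith
  have key2 : ∀ k : E, (f' x - f' y) k ≤ 2 * (L / (1 + ν)) *
      ((‖k‖ ^ 2 + ‖(2⁻¹ : ℝ) • (x - y)‖ ^ 2) ^ ((1 + ν) / 2)) := by
    intro k
    refine (key k).trans ?_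
    set e : E := (2⁻¹ : ℝ) • (x - y) with he
    have par : (‖k - e‖ ^ 2 : ℝ) + ‖k + e‖ ^ 2 = 2 * (‖k‖ ^ 2 + ‖e‖ ^ 2) := by
      have h := parallelogram_law_with_norm ℝ k e
      nlinarith [h]
    have c1 : ‖k - e‖ ^ (1 + ν) = ((‖k - e‖ ^ 2 : ℝ)) ^ ((1 + ν) / 2) := by
      rw [← Real.rpow_natCast ‖k - e‖ 2, ← Real.rpow_mul (norm_nonneg _)]
      congr 1
      push_cast; ring
    have c2 : ‖k + e‖ ^ (1 + ν) = ((‖k + e‖ ^ 2 : ℝ)) ^ ((1 + ν) / 2) := by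
      rw [← Real.rpow_natCast ‖k + e‖ 2, ← Real.rpow_mul (norm_nonneg _)]
      congr 1
      push_cast; ring
    have conc := real_concave' hθ0 hθ1 (sq_nonneg ‖k - e‖) (sq_nonneg ‖k + e‖)
    rw [par] at conc
    have S0 : (0 : ℝ) ≤ ‖k‖ ^ 2 + ‖e‖ ^ 2 := by positivity
    have mulr : ((2 : ℝ) * (‖k‖ ^ 2 + ‖e‖ ^ 2)) ^ ((1 + ν) / 2) =
        (2 : ℝ) ^ ((1 + ν) / 2) * (‖k‖ ^ 2 + ‖e‖ ^ 2) ^ ((1 + ν) / 2) :=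
      Real.mul_rpow (by norm_num) S0
    have two_eq : (2 : ℝ) ^ (1 - (1 + ν) / 2) * (2 : ℝ) ^ ((1 + ν) / 2) = 2 := by
      rw [← Real.rpow_add two_pos]
      norm_num
    rw [mulr, ← mul_assoc, two_eq] at conc
    rw [c1, c2]
    have hM : (0 : ℝ) ≤ L / (1 + ν) := div_nonneg hL hν1'.le
    calc L / (1 + ν) * ((‖k - e‖ ^ 2 : ℝ) ^ ((1 + ν) / 2) + (‖k + e‖ ^ 2 : ℝ) ^ ((1 + ν) / 2))
        ≤ L / (1 + ν) * (2 * (‖k‖ ^ 2 + ‖e‖ ^ 2) ^ ((1 + ν) / 2)) := by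
          exact mul_le_mul_of_nonneg_left conc hM
      _ = 2 * (L / (1 + ν)) * ((‖k‖ ^ 2 + ‖e‖ ^ 2) ^ ((1 + ν) / 2)) := by ring
  -- Step 3: conclude
  rcases eq_or_ne x y with rfl | hxy
  · simp [sub_self, Real.zero_rpow hν0.ne']
  · have hr : 0 < ‖x - y‖ := by
      rw [norm_pos_iff, sub_ne_zero]; exact hxy
    have hs1ν : 0 < Real.sqrt (1 + ν) := Real.sqrt_pos.mpr hν1'
    have hsν : 0 < Real.sqrt ν := Real.sqrt_pos.mpr hν0
    have aux : ∀ k : E, (f' x - f' y) k ≤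
        2 ^ (1 - ν) / Real.sqrt (1 + ν) * ((1 + ν) / ν) ^ (ν / 2) * L * ‖x - y‖ ^ ν * ‖k‖ := by
      intro k
      rcases eq_or_ne k 0 with rfl | hk
      · simp
      · have hknorm : 0 < ‖k‖ := norm_pos_iff.mpr hk
        set r : ℝ := ‖x - y‖ with hrdef
        set t : ℝ := r / (2 * Real.sqrt ν) with htdef
        have ht : 0 < t := by positivity
        set c : ℝ := t / ‖k‖ with hcdef
        have hc : 0 < c := by positivity
        have h2 := key2 (c • k)
        rw [map_smul, smul_eq_mul] at h2
        have hck : ‖c • k‖ = t := by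
          rw [norm_smul, Real.norm_eq_abs, abs_of_pos hc, hcdef]
          field_simp
        have hev : ‖(2⁻¹ : ℝ) • (x - y)‖ = r / 2 := by
          rw [norm_smul, Real.norm_eq_abs, abs_of_pos (by norm_num : (0:ℝ) < 2⁻¹), ← hrdef]
          ring
        rw [hck, hev] at h2
        have harg : t ^ 2 + (r / 2) ^ 2 = r ^ 2 * ((1 + ν) / ν / 4) := by
          have ht2 : t ^ 2 = r ^ 2 / (4 * ν) := by
            rw [htdef, div_pow, mul_pow, Real.sq_sqrt hν0.le]
            norm_num
          rw [ht2]
          field_simp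
          ring
        rw [harg] at h2
        -- the constant identity
        have star : 2 * (L / (1 + ν)) * ((r ^ 2 * ((1 + ν) / ν / 4)) ^ ((1 + ν) / 2)) =
            2 ^ (1 - ν) / Real.sqrt (1 + ν) * ((1 + ν) / ν) ^ (ν / 2) * L * r ^ ν * t := by
          have hB : (0:ℝ) < (1 + ν) / ν := by positivity
          have e0 : (r ^ 2 * ((1 + ν) / ν / 4)) ^ ((1 + ν) / 2) =
              (r ^ 2 : ℝ) ^ ((1 + ν) / 2) * (((1 + ν) / ν) ^ ((1 + ν) / 2) / (4:ℝ) ^ ((1 + ν) / 2)) := by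
            rw [Real.mul_rpow (by positivity) (by positivity),
              Real.div_rpow hB.le (by norm_num : (0:ℝ) ≤ 4)]
          have e1 : (r ^ 2 : ℝ) ^ ((1 + ν) / 2) = r ^ ν * r := by
            rw [← Real.rpow_natCast r 2, ← Real.rpow_mul hr.le,
              show ((2:ℕ):ℝ) * ((1 + ν) / 2) = ν + 1 from by push_cast; ring,
              Real.rpow_add hr, Real.rpow_one]
          have e2 : (4:ℝ) ^ ((1 + ν) / 2) = 2 ^ ν * 2 := by
            rw [show (4:ℝ) = (2:ℝ) ^ (2:ℝ) from by
                rw [show (2:ℝ) = ((2:ℕ):ℝ) from by norm_num, Real.rpow_natCast]; norm_num,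
              ← Real.rpow_mul (by norm_num : (0:ℝ) ≤ 2),
              show (2:ℝ) * ((1 + ν) / 2) = ν + 1 from by ring,
              Real.rpow_add two_pos, Real.rpow_one]
          have e3 : ((1 + ν) / ν) ^ ((1 + ν) / 2) =
              ((1 + ν) / ν) ^ (ν / 2) * (Real.sqrt (1 + ν) / Real.sqrt ν) := by
            rw [show (1 + ν) / 2 = ν / 2 + 1 / 2 from by ring, Real.rpow_add hB]
            congr 1
            rw [← Real.sqrt_eq_rpow, Real.sqrt_div hν1'.le]
          have eQ : (2:ℝ) ^ (1 - ν) = 2 / 2 ^ ν := by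
            rw [Real.rpow_sub two_pos, Real.rpow_one]
          rw [e0, e1, e2, e3, eQ, htdef]
          have hq : (0:ℝ) < 2 ^ ν := Real.rpow_pos_of_pos two_pos ν
          have hs1 : Real.sqrt (1 + ν) * Real.sqrt (1 + ν) = 1 + ν :=
            Real.mul_self_sqrt hν1'.le
          rw [show (1:ℝ) + ν = Real.sqrt (1 + ν) * Real.sqrt (1 + ν) from hs1.symm]
          field_simp
          linear_combination L * Real.sq_sqrt (sq_nonneg (Real.sqrt (1 + ν)))
        rw [star] at h2
        have htc : t = c * ‖k‖ := by rw [hcdef, div_mul_cancel₀ _ hknorm.ne']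
        have h3 : c * ((f' x - f' y) k) ≤
            c * (2 ^ (1 - ν) / Real.sqrt (1 + ν) * ((1 + ν) / ν) ^ (ν / 2) * L * r ^ ν * ‖k‖) := by
          calc c * ((f' x - f' y) k)
              ≤ 2 ^ (1 - ν) / Real.sqrt (1 + ν) * ((1 + ν) / ν) ^ (ν / 2) * L * r ^ ν * t := h2
            _ = c * (2 ^ (1 - ν) / Real.sqrt (1 + ν) * ((1 + ν) / ν) ^ (ν / 2) * L * r ^ ν * ‖k‖) := by
                rw [htc]; ring
        exact le_of_mul_le_mul_left h3 hc
    refine ContinuousLinearMap.opNorm_le_bound _ (by positivity) fun k => ?_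
    rw [Real.norm_eq_abs, abs_le]
    constructor
    · have hnk := aux (-k)
      rw [map_neg, norm_neg] at hnk
      linarith
    · exact aux k
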